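/- If G is a countable group and π : Γ → G is an ICC homomorphism from a group Γ, then any finite measure on G that is invariant under conjugation by every element of π(Γ) is supported on the identity element. -/
import Mathlib


open MeasureTheory

/-- A homomorphism `π : Γ →* G` is ICC if every nonidentity element of `G` has an
infinite orbit under conjugation by elements of `π(Γ)`. -/
def IsICC {Γ G : Type} [Group Γ] [Group G] (π : Γ →* G) : Prop :=
  ∀ g : G, g ≠ 1 → {h : G | ∃ γ : Γ, π γ * g * (π γ)⁻¹ = h}.Infinite

/-- If `π : Γ →* G` is ICC (with `G` countable discrete), then any finite measure
on `G` invariant under conjugation by every element of `π(Γ)` is supported on the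
identity. -/
theorem conj_invariant_measure_supported_on_identity {Γ G : Type} [Group Γ] [Group G]
    [Countable G] [MeasurableSpace G] [DiscreteMeasurableSpace G]
    (π : Γ →* G) (hicc : IsICC π)
    (ν : Measure G) [IsFiniteMeasure ν]
    (hinv : ∀ γ : Γ, ν.map (fun g => π γ * g * (π γ)⁻¹) = ν) :
    ν {(1 : G)}ᶜ = 0 := by
  -- each nonidentity singleton has measure 0
  have key : ∀ g : G, g ≠ 1 → ν {g} = 0 := by
    intro g hg
    by_contra hc
    -- every element of the orbit has the same measure as g
    have horb : ∀ h ∈ {h : G | ∃ γ : Γ, π γ * g * (π γ)⁻¹ = h}, ν {h} = ν {g} := by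
      rintro h ⟨γ, rfl⟩
      have hm : Measurable (fun x : G => π γ * x * (π γ)⁻¹) := measurable_of_countable _
      have := hinv γ
      calc ν {π γ * g * (π γ)⁻¹} = (ν.map (fun x : G => π γ * x * (π γ)⁻¹)) {π γ * g * (π γ)⁻¹} := by
            rw [this]
        _ = ν ((fun x : G => π γ * x * (π γ)⁻¹) ⁻¹' {π γ * g * (π γ)⁻¹}) := by
            rw [Measure.map_apply hm (MeasurableSet.singleton _)]
        _ = ν {g} := by
            congr 1
            ext x
            simp only [Set.mem_preimage, Set.mem_singleton_iff]
            constructor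
            · intro hx
              have : x = g := by
                have h1 := mul_right_cancel hx
                exact mul_left_cancel h1
              exact this
            · rintro rfl; rfl
    -- infinite orbit with constant positive measure contradicts finiteness
    obtain f := (hicc g hg).natEmbedding
    have hdisj : Pairwise (Function.onFun Disjoint (fun n : ℕ => ({(f n : G)} : Set G))) := by
      intro m n hmn
      simp only [Function.onFun, Set.disjoint_singleton]
      exact fun h => hmn (f.injective (Subtype.ext h))
    have hsum : ν (⋃ n : ℕ, {(f n : G)}) = ∑' n : ℕ, ν {(f n : G)} :=
      measure_iUnion hdisj (fun n => MeasurableSet.singleton _)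
    have hconst : ∀ n : ℕ, ν {(f n : G)} = ν {g} := fun n => horb _ (f n).2
    have htop : ν (⋃ n : ℕ, {(f n : G)}) = ⊤ := by
      rw [hsum]
      simp only [hconst]
      exact ENNReal.tsum_const_eq_top_of_ne_zero hc
    exact (measure_lt_top ν _).ne (htop)
  -- the complement of {1} is a countable union of null singletons
  have : ({(1 : G)}ᶜ : Set G) = ⋃ g ∈ ({(1 : G)}ᶜ : Set G), {g} := by
    ext x; simp
  rw [this]
  refine measure_biUnion_null_iff (Set.to_countable _) |>.2 ?_
  intro g hg
  exact key g (by simpa using hg)
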